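/- Let $A$ be a nontrivial commutative ring. Then the following are equivalent: (a) $u + v \in A^\times \cup J(A)$ for all units $u, v$ (i.e., $A$ is sublocalizable); (b) $A^\times \cup J(A)$ is a subring of $A$; (c) $A^\times \cup J(A)$ is a local subring of $A$ with maximal ideal $J(A)$ whose units are exactly $A^\times$; (d) there exists a proper ideal $I$ of $A$ such that $A^\times \cup I$ is a subring of $A$ — and in this case necessarily $I = J(A)$. -/

import Mathlib

section Aux

variable {A : Type*} [CommRing A]

lemma jac_add_unit {u j : A} (hu : IsUnit u) (hj : j ∈ (⊥ : Ideal A).jacobson) :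
    IsUnit (u + j) := by
  obtain ⟨v, rfl⟩ := hu
  have h1 : IsUnit (j * (↑v⁻¹ : A) + 1) := Ideal.mem_jacobson_bot.mp hj _
  have : (↑v : A) + j = ↑v * (j * (↑v⁻¹ : A) + 1) := by
    rw [mul_add, mul_one, ← mul_assoc, mul_comm (↑v : A) j, mul_assoc,
      Units.mul_inv, mul_one, add_comm]
  rw [this]
  exact v.isUnit.mul h1

lemma jac_ne_top [Nontrivial A] : ((⊥ : Ideal A).jacobson : Ideal A) ≠ ⊤ := by
  intro h
  have h1 : (1 : A) ∈ (⊥ : Ideal A).jacobson := h ▸ Submodule.mem_top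
  have := Ideal.mem_jacobson_bot.mp h1 (-1)
  simp at this

end Aux

theorem stmt_19 {A : Type*} [CommRing A] [Nontrivial A] :
    let J : Ideal A := (⊥ : Ideal A).jacobson
    let S : Set A := {a : A | IsUnit a} ∪ (J : Set A)
    ((∀ u v : A, IsUnit u → IsUnit v → (IsUnit (u + v) ∨ u + v ∈ J)) ↔
      (∃ B : Subring A, (B : Set A) = S)) ∧
    ((∃ B : Subring A, (B : Set A) = S) ↔
      (∃ B : Subring A, (B : Set A) = S ∧ IsLocalRing B ∧
        (∀ x : B, IsUnit x ↔ IsUnit (x : A)) ∧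
        (∀ x : B, (x : A) ∈ J ↔ ¬ IsUnit x))) ∧
    ((∃ B : Subring A, (B : Set A) = S) ↔
      (∃ I : Ideal A, I ≠ ⊤ ∧
        ∃ B : Subring A, (B : Set A) = {a : A | IsUnit a} ∪ (I : Set A))) ∧
    (∀ I : Ideal A, I ≠ ⊤ →
      (∃ B : Subring A, (B : Set A) = {a : A | IsUnit a} ∪ (I : Set A)) →
      I = J) := by
  intro J S
  -- part (4) first
  have part4 : ∀ I : Ideal A, I ≠ ⊤ →
      (∃ B : Subring A, (B : Set A) = {a : A | IsUnit a} ∪ (I : Set A)) → I = J := by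
    rintro I hI ⟨B, hB⟩
    have memB : ∀ a : A, a ∈ B ↔ (IsUnit a ∨ a ∈ I) := by
      intro a
      constructor
      · intro h
        have : a ∈ (B : Set A) := h
        rw [hB] at this
        exact this
      · intro h
        have : a ∈ (B : Set A) := by rw [hB]; exact h
        exact this
    apply le_antisymm
    · -- I ⊆ J
      intro x hx
      refine Ideal.mem_jacobson_bot.mpr fun b => ?_
      by_contra hne
      have hxb : x * b ∈ I := Ideal.mul_mem_right _ _ hx
      have h1 : x * b + 1 ∈ B := B.add_mem ((memB _).mpr (Or.inr hxb)) B.one_mem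
      rcases (memB _).mp h1 with h | h
      · exact hne h
      · have : (1 : A) ∈ I := by
          have := I.sub_mem h hxb
          simpa using this
        exact hI (Ideal.eq_top_of_isUnit_mem _ this isUnit_one)
    · -- J ⊆ I
      intro j hj
      have hu : IsUnit (1 + j) := jac_add_unit isUnit_one hj
      have h1 : (1 : A) + j ∈ B := (memB _).mpr (Or.inl hu)
      have hjB : j ∈ B := by
        have := B.sub_mem h1 B.one_mem
        simpa using this
      rcases (memB _).mp hjB with h | h
      · exfalso
        exact jac_ne_top (Ideal.eq_top_of_isUnit_mem _ hj h)
      · exact h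
  have memS : ∀ a : A, a ∈ S ↔ (IsUnit a ∨ a ∈ J) := fun a => Iff.rfl
  -- (a) → (b)
  have hab : (∀ u v : A, IsUnit u → IsUnit v → (IsUnit (u + v) ∨ u + v ∈ J)) →
      (∃ B : Subring A, (B : Set A) = S) := by
    intro ha
    refine ⟨{ carrier := S,
              one_mem' := Or.inl isUnit_one,
              zero_mem' := Or.inr J.zero_mem,
              mul_mem' := ?_, add_mem' := ?_, neg_mem' := ?_ }, rfl⟩
    · rintro a b (ha' | ha') (hb' | hb')
      · exact Or.inl (ha'.mul hb')
      · exact Or.inr (Ideal.mul_mem_left _ _ hb')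
      · exact Or.inr (Ideal.mul_mem_right _ _ ha')
      · exact Or.inr (Ideal.mul_mem_right _ _ ha')
    · rintro a b (ha' | ha') (hb' | hb')
      · exact ha a b ha' hb'
      · exact Or.inl (jac_add_unit ha' hb')
      · exact Or.inl (by rw [add_comm]; exact jac_add_unit hb' ha')
      · exact Or.inr (J.add_mem ha' hb')
    · rintro a (ha' | ha')
      · exact Or.inl ha'.neg
      · exact Or.inr (J.neg_mem ha')
  have hba : (∃ B : Subring A, (B : Set A) = S) →
      (∀ u v : A, IsUnit u → IsUnit v → (IsUnit (u + v) ∨ u + v ∈ J)) := by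
    rintro ⟨B, hB⟩ u v hu hv
    have huB : u ∈ B := by rw [← SetLike.mem_coe, hB]; exact Or.inl hu
    have hvB : v ∈ B := by rw [← SetLike.mem_coe, hB]; exact Or.inl hv
    have : u + v ∈ (B : Set A) := B.add_mem huB hvB
    rw [hB] at this
    exact this
  refine ⟨⟨hab, hba⟩, ?_, ?_, part4⟩
  · -- (b) ↔ (c)
    constructor
    · rintro ⟨B, hB⟩
      have memB : ∀ a : A, a ∈ B ↔ (IsUnit a ∨ a ∈ J) := by
        intro a
        rw [← SetLike.mem_coe, hB]; exact Iff.rfl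
      have hunit : ∀ x : B, IsUnit x ↔ IsUnit (x : A) := by
        intro x
        constructor
        · intro h
          exact h.map B.subtype
        · rintro ⟨v, hv⟩
          have hinv : ((↑v⁻¹ : A)) ∈ B := (memB _).mpr (Or.inl v⁻¹.isUnit)
          refine IsUnit.of_mul_eq_one (a := x) ⟨(↑v⁻¹ : A), hinv⟩ ?_
          ext
          simp [← hv, Units.mul_inv]
      have hmem : ∀ x : B, (x : A) ∈ J ↔ ¬ IsUnit x := by
        intro x
        constructor
        · intro h hx
          exact jac_ne_top (Ideal.eq_top_of_isUnit_mem _ h ((hunit x).mp hx))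
        · intro hx
          rcases (memB _).mp x.2 with h | h
          · exact absurd ((hunit x).mpr h) hx
          · exact h
      have : Nontrivial B := ⟨⟨0, 1, by
        intro h
        exact zero_ne_one (congrArg (Subtype.val) h)⟩⟩
      have hloc : IsLocalRing B := by
        apply IsLocalRing.of_isUnit_or_isUnit_one_sub_self
        intro x
        rcases (memB _).mp x.2 with h | h
        · exact Or.inl ((hunit x).mpr h)
        · refine Or.inr ((hunit _).mpr ?_)
          push_cast
          rw [sub_eq_add_neg]
          exact jac_add_unit isUnit_one (J.neg_mem h)
      exact ⟨B, hB, hloc, hunit, hmem⟩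
    · rintro ⟨B, hB, _⟩
      exact ⟨B, hB⟩
  · -- (b) ↔ (d)
    constructor
    · rintro ⟨B, hB⟩
      exact ⟨J, jac_ne_top, B, hB⟩
    · rintro ⟨I, hI, B, hB⟩
      have := part4 I hI ⟨B, hB⟩
      subst this
      exact ⟨B, hB⟩
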